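/- arXiv:2604.00855 — 7 statements merged into one kernel-verified Lean document; each statement's English description precedes it below -/
import Mathlib

section
/- Let E be a real normed vector space (in fact any type with addition and subtraction suffices), 𝒢, ℱ : E → E, and u₀ ∈ E. Let U⁰ : ℕ → E be any initial sequence with U⁰(0) = u₀, and define the Parareal iterates for k ≥ 1 by U^k(0) = u₀ and U^k(n) = 𝒢(U^k(n−1)) + ℱ(U^{k−1}(n−1)) − 𝒢(U^{k−1}(n−1)) for n ≥ 1. Then for all k ≥ 0 and all n ≤ k, U^k(n) = ℱ^[n](u₀), i.e. after k iterations the first k interface values coincide exactly with the fine solution. -/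
/-- Finite termination of Parareal: after `k` iterations the first `k`
interface values coincide exactly with the fine solution `ℱ^[n](u₀)`, regardless of
the initial guess and of the coarse propagator `𝒢`. -/
theorem parareal_finite_termination
    {E : Type*} [NormedAddCommGroup E] [NormedSpace ℝ E]
    (F G : E → E) (u₀ : E) (U : ℕ → ℕ → E)
    (h0 : ∀ k : ℕ, U k 0 = u₀)
    (hrec : ∀ k n : ℕ, U (k + 1) (n + 1) = G (U (k + 1) n) + F (U k n) - G (U k n)) :
    ∀ k n : ℕ, n ≤ k → U k n = F^[n] u₀ := by
  intro k
  induction k with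
  | zero => intro n hn; interval_cases n; simpa using h0 0
  | succ k ih =>
    intro n
    induction n with
    | zero => intro _; simpa using h0 (k + 1)
    | succ n ihn =>
      intro hn
      have hnk : n ≤ k := Nat.lt_succ_iff.mp hn
      rw [hrec, ih n hnk, ihn (Nat.le_succ_of_le hnk), Function.iterate_succ_apply']
      abel
end

section
/- Let E be a real normed vector space, 𝒢, ℱ : E → E, u₀ ∈ E, and suppose ‖𝒢(x) − 𝒢(y)‖ ≤ γ‖x − y‖ and ‖(ℱ(x) − 𝒢(x)) − (ℱ(y) − 𝒢(y))‖ ≤ δ‖x − y‖ for all x, y ∈ E. Let U⁰ : ℕ → E satisfy U⁰(0) = u₀ and define the Parareal iterates for k ≥ 1 by U^k(0) = u₀ and U^k(n) = 𝒢(U^k(n−1)) + ℱ(U^{k−1}(n−1)) − 𝒢(U^{k−1}(n−1)) for n ≥ 1. Let U*(n) = ℱ^[n](u₀). Then for all k ≥ 1 and n ≥ 1, ‖U^k(n) − U*(n)‖ ≤ γ‖U^k(n−1) − U*(n−1)‖ + δ‖U^{k−1}(n−1) − U*(n−1)‖. -/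
/-- One-step Parareal error recursion: the error of the `k`-th iterate at
chunk `n` is bounded by the transported previous-chunk error (factor `γ`, the Lipschitz
constant of the coarse solver) plus the fresh error source (factor `δ`, the Lipschitz
constant of the discrepancy `ℱ - 𝒢`). -/
theorem parareal_error_recursion
    {E : Type*} [NormedAddCommGroup E] [NormedSpace ℝ E]
    (F G : E → E) (u₀ : E) (γ δ : ℝ)
    (hG : ∀ x y : E, ‖G x - G y‖ ≤ γ * ‖x - y‖)
    (hFG : ∀ x y : E, ‖(F x - G x) - (F y - G y)‖ ≤ δ * ‖x - y‖)
    (U : ℕ → ℕ → E)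
    (h0 : ∀ k : ℕ, U k 0 = u₀)
    (hrec : ∀ k n : ℕ, U (k + 1) (n + 1) = G (U (k + 1) n) + F (U k n) - G (U k n)) :
    ∀ k n : ℕ,
      ‖U (k + 1) (n + 1) - F^[n + 1] u₀‖
        ≤ γ * ‖U (k + 1) n - F^[n] u₀‖ + δ * ‖U k n - F^[n] u₀‖ := by
  intro k n
  have h1 : U (k + 1) (n + 1) - F^[n + 1] u₀
      = (G (U (k + 1) n) - G (F^[n] u₀))
        + ((F (U k n) - G (U k n)) - (F (F^[n] u₀) - G (F^[n] u₀))) := by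
    rw [hrec, Function.iterate_succ_apply']
    abel
  calc ‖U (k + 1) (n + 1) - F^[n + 1] u₀‖
      ≤ ‖G (U (k + 1) n) - G (F^[n] u₀)‖
        + ‖(F (U k n) - G (U k n)) - (F (F^[n] u₀) - G (F^[n] u₀))‖ := by
        rw [h1]; exact norm_add_le _ _
    _ ≤ γ * ‖U (k + 1) n - F^[n] u₀‖ + δ * ‖U k n - F^[n] u₀‖ :=
        add_le_add (hG _ _) (hFG _ _)
end

section
/- Let E be a real normed vector space, 𝒢, ℱ : E → E, u₀ ∈ E, N ≥ 1, and suppose ‖𝒢(x) − 𝒢(y)‖ ≤ γ‖x − y‖ and ‖(ℱ(x) − 𝒢(x)) − (ℱ(y) − 𝒢(y))‖ ≤ δ‖x − y‖ for all x, y ∈ E. Let U⁰ : ℕ → E satisfy U⁰(0) = u₀ and define the Parareal iterates for k ≥ 1 by U^k(0) = u₀ and U^k(n) = 𝒢(U^k(n−1)) + ℱ(U^{k−1}(n−1)) − 𝒢(U^{k−1}(n−1)) for n ≥ 1. Let U*(n) = ℱ^[n](u₀). Then for every k ≥ 1, the sup error over one iteration contracts by the factor β = δ · Σ_{i=0}^{N−1}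 γ^i; that is, max_{0 ≤ n ≤ N} ‖U^k(n) − U*(n)‖ ≤ δ · (Σ_{i=0}^{N−1} γ^i) · max_{0 ≤ n ≤ N} ‖U^{k−1}(n) − U*(n)‖. -/
/-- Parareal contracts the sup error over the trajectory by the factor
`β = δ · Σ_{i=0}^{N-1} γ^i` at every iteration, where `γ` is the Lipschitz constant of
the coarse solver `𝒢` and `δ` that of the discrepancy `ℱ - 𝒢`. -/
theorem parareal_sup_error_contraction
    {E : Type*} [NormedAddCommGroup E] [NormedSpace ℝ E]
    (F G : E → E) (u₀ : E) (N : ℕ) (hN : 1 ≤ N) (γ δ : ℝ)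
    (hγ : 0 ≤ γ) (hδ : 0 ≤ δ)
    (hG : ∀ x y : E, ‖G x - G y‖ ≤ γ * ‖x - y‖)
    (hFG : ∀ x y : E, ‖(F x - G x) - (F y - G y)‖ ≤ δ * ‖x - y‖)
    (U : ℕ → ℕ → E)
    (h0 : ∀ k : ℕ, U k 0 = u₀)
    (hrec : ∀ k n : ℕ, U (k + 1) (n + 1) = G (U (k + 1) n) + F (U k n) - G (U k n)) :
    ∀ k : ℕ,
      (Finset.range (N + 1)).sup' (Finset.nonempty_range_iff.mpr (Nat.succ_ne_zero N))
          (fun n => ‖U (k + 1) n - F^[n] u₀‖)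
        ≤ δ * (∑ i ∈ Finset.range N, γ ^ i) *
          (Finset.range (N + 1)).sup' (Finset.nonempty_range_iff.mpr (Nat.succ_ne_zero N))
            (fun n => ‖U k n - F^[n] u₀‖) := by
  intro k
  set ne := Finset.nonempty_range_iff.mpr (Nat.succ_ne_zero N)
  set M : ℝ := (Finset.range (N + 1)).sup' ne (fun n => ‖U k n - F^[n] u₀‖) with hM
  have hMn : ∀ n, n ≤ N → ‖U k n - F^[n] u₀‖ ≤ M := by
    intro n hn
    exact Finset.le_sup' (f := fun n => ‖U k n - F^[n] u₀‖)
      (Finset.mem_range_succ_iff.mpr hn)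
  have hM0 : 0 ≤ M := le_trans (norm_nonneg _) (hMn 0 (Nat.zero_le N))
  -- key recursion bound
  have step : ∀ n, ‖U (k + 1) (n + 1) - F^[n + 1] u₀‖ ≤
      γ * ‖U (k + 1) n - F^[n] u₀‖ + δ * ‖U k n - F^[n] u₀‖ := by
    intro n
    have heq : U (k + 1) (n + 1) - F^[n + 1] u₀ =
        (G (U (k + 1) n) - G (F^[n] u₀)) +
        ((F (U k n) - G (U k n)) - (F (F^[n] u₀) - G (F^[n] u₀))) := by
      rw [hrec, Function.iterate_succ_apply']
      abel
    calc ‖U (k + 1) (n + 1) - F^[n + 1] u₀‖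
        ≤ ‖G (U (k + 1) n) - G (F^[n] u₀)‖ +
          ‖(F (U k n) - G (U k n)) - (F (F^[n] u₀) - G (F^[n] u₀))‖ := by
          rw [heq]; exact norm_add_le _ _
      _ ≤ γ * ‖U (k + 1) n - F^[n] u₀‖ + δ * ‖U k n - F^[n] u₀‖ :=
          add_le_add (hG _ _) (hFG _ _)
  -- bound by partial sums
  have bound : ∀ n, n ≤ N → ‖U (k + 1) n - F^[n] u₀‖ ≤
      δ * (∑ i ∈ Finset.range n, γ ^ i) * M := by
    intro n
    induction n with
    | zero =>
        intro _
        simp [h0, Function.iterate_zero]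
    | succ n ih =>
        intro hn
        have hn' : n ≤ N := Nat.le_of_succ_le hn
        calc ‖U (k + 1) (n + 1) - F^[n + 1] u₀‖
            ≤ γ * ‖U (k + 1) n - F^[n] u₀‖ + δ * ‖U k n - F^[n] u₀‖ := step n
          _ ≤ γ * (δ * (∑ i ∈ Finset.range n, γ ^ i) * M) + δ * M := by
              gcongr
              exacts [ih hn', hMn n hn']
          _ = δ * (∑ i ∈ Finset.range (n + 1), γ ^ i) * M := by
              rw [Finset.sum_range_succ']
              simp only [pow_succ, pow_zero]
              rw [← Finset.sum_mul]
              ring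
  apply Finset.sup'_le
  intro n hn
  have hn' : n ≤ N := Finset.mem_range_succ_iff.mp hn
  refine (bound n hn').trans ?_
  refine mul_le_mul_of_nonneg_right (mul_le_mul_of_nonneg_left ?_ hδ) hM0
  exact Finset.sum_le_sum_of_subset_of_nonneg (Finset.range_subset_range.mpr hn')
    (fun i _ _ => pow_nonneg hγ i)
end

section
/- Let E be a real normed vector space and J : ℝ → (E →L[ℝ] E) be Lipschitz continuous with constant ν ≥ 0 in the operator norm. Let h > 0, let ξ ≥ 1 and L ≥ 1 be natural numbers, and let t₀ ∈ ℝ. Then the difference between the fine-step and coarse-step Riemann sums of J satisfies ‖ h • Σ_{i=1}^{ξL} J(t₀ + (i−1)h) − (ξh) • Σ_{j=1}^{L} J(t₀ + (j−1)ξh) ‖ ≤ L · h² · ν · ξ(ξ−1)/2. -/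
/-- First-order Jacobian mismatch `Δ₁` between the fine and coarse Riemann
sums: if `J` is Lipschitz with constant `ν` in the operator norm, then the difference
between the fine-step and coarse-step sums over one chunk of length `ΔT = Lξh` is
bounded by `L h² ν ξ(ξ-1)/2`. -/
theorem jacobian_riemann_sum_mismatch
    {E : Type*} [NormedAddCommGroup E] [NormedSpace ℝ E]
    (J : ℝ → (E →L[ℝ] E)) (ν : ℝ) (hν : 0 ≤ ν)
    (hJ : ∀ s t : ℝ, ‖J s - J t‖ ≤ ν * |s - t|)
    (h : ℝ) (hh : 0 < h) (ξ L : ℕ) (hξ : 1 ≤ ξ) (hL : 1 ≤ L) (t₀ : ℝ) :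
    ‖h • ∑ i ∈ Finset.range (ξ * L), J (t₀ + i * h)
        - ((ξ : ℝ) * h) • ∑ j ∈ Finset.range L, J (t₀ + j * ((ξ : ℝ) * h))‖
      ≤ L * h ^ 2 * ν * ((ξ : ℝ) * ((ξ : ℝ) - 1) / 2) := by
  -- reindex the fine sum as a double sum
  have hre : ∀ (f : ℕ → E →L[ℝ] E) (n : ℕ),
      ∑ i ∈ Finset.range (ξ * n), f i
        = ∑ j ∈ Finset.range n, ∑ k ∈ Finset.range ξ, f (ξ * j + k) := by
    intro f n
    induction n with
    | zero => simp
    | succ m ih =>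
        rw [Nat.mul_succ, Finset.sum_range_add, ih, Finset.sum_range_succ]
  rw [hre (fun i => J (t₀ + (i : ℝ) * h)) L]
  have hcoarse : ((ξ : ℝ) * h) • ∑ j ∈ Finset.range L, J (t₀ + (j : ℝ) * ((ξ : ℝ) * h))
      = h • ∑ j ∈ Finset.range L, ∑ _k ∈ Finset.range ξ,
          J (t₀ + (j : ℝ) * ((ξ : ℝ) * h)) := by
    rw [mul_comm, mul_smul, Finset.smul_sum]
    congr 1
    refine Finset.sum_congr rfl fun j _ => ?_
    rw [Finset.sum_const, Finset.card_range]
    rw [← Nat.cast_smul_eq_nsmul ℝ]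
  rw [hcoarse, ← smul_sub]
  simp only [← Finset.sum_sub_distrib]
  have hgauss : ∑ k ∈ Finset.range ξ, (k : ℝ) = (ξ : ℝ) * ((ξ : ℝ) - 1) / 2 := by
    have : ∀ n : ℕ, ∑ k ∈ Finset.range n, (k : ℝ) = (n : ℝ) * ((n : ℝ) - 1) / 2 := by
      intro n
      induction n with
      | zero => simp
      | succ m ih => rw [Finset.sum_range_succ, ih]; push_cast; ring
    exact this ξ
  have hterm : ∀ j ∈ Finset.range L,
      ‖∑ k ∈ Finset.range ξ,
          (J (t₀ + ((ξ * j + k : ℕ) : ℝ) * h) - J (t₀ + (j : ℝ) * ((ξ : ℝ) * h)))‖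
        ≤ ν * h * ((ξ : ℝ) * ((ξ : ℝ) - 1) / 2) := by
    intro j _
    calc ‖∑ k ∈ Finset.range ξ,
          (J (t₀ + ((ξ * j + k : ℕ) : ℝ) * h) - J (t₀ + (j : ℝ) * ((ξ : ℝ) * h)))‖
        ≤ ∑ k ∈ Finset.range ξ, ν * h * (k : ℝ) := by
          refine norm_sum_le_of_le _ fun k _ => ?_
          have := hJ (t₀ + ((ξ * j + k : ℕ) : ℝ) * h) (t₀ + (j : ℝ) * ((ξ : ℝ) * h))
          refine this.trans_eq ?_
          have habs : |t₀ + ((ξ * j + k : ℕ) : ℝ) * h - (t₀ + (j : ℝ) * ((ξ : ℝ) * h))|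
              = (k : ℝ) * h := by
            have : t₀ + ((ξ * j + k : ℕ) : ℝ) * h - (t₀ + (j : ℝ) * ((ξ : ℝ) * h))
                = (k : ℝ) * h := by push_cast; ring
            rw [this, abs_of_nonneg (by positivity)]
          rw [habs]; ring
      _ = ν * h * ((ξ : ℝ) * ((ξ : ℝ) - 1) / 2) := by
          rw [← Finset.mul_sum, hgauss]
  calc ‖h • ∑ j ∈ Finset.range L, ∑ k ∈ Finset.range ξ,
          (J (t₀ + ((ξ * j + k : ℕ) : ℝ) * h) - J (t₀ + (j : ℝ) * ((ξ : ℝ) * h)))‖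
      = h * ‖∑ j ∈ Finset.range L, ∑ k ∈ Finset.range ξ,
          (J (t₀ + ((ξ * j + k : ℕ) : ℝ) * h) - J (t₀ + (j : ℝ) * ((ξ : ℝ) * h)))‖ := by
        rw [norm_smul h (∑ j ∈ Finset.range L, ∑ k ∈ Finset.range ξ,
          (J (t₀ + ((ξ * j + k : ℕ) : ℝ) * h) - J (t₀ + (j : ℝ) * ((ξ : ℝ) * h)))),
          Real.norm_eq_abs, abs_of_pos hh]
    _ ≤ h * ∑ j ∈ Finset.range L, (ν * h * ((ξ : ℝ) * ((ξ : ℝ) - 1) / 2)) := by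
        gcongr
        exact norm_sum_le_of_le _ hterm
    _ = L * h ^ 2 * ν * ((ξ : ℝ) * ((ξ : ℝ) - 1) / 2) := by
        rw [Finset.sum_const, Finset.card_range]
        push_cast
        ring
end

section
/- Let E be a real normed vector space, ℱ : E → E Lipschitz with constant Λ ≥ 0, w > 0, θ = Λ/w, N ≥ 1, and u₀ ∈ E. Let U : Fin (N+1) → E be a sequence with U(0) = u₀, let U*(n) = ℱ^[n](u₀), and let d_n = ‖U(n) − ℱ(U(n−1))‖ for 1 ≤ n ≤ N. Then Σ_{n=1}^{N} w^{−n} d_n ≤ (1 + θ) · Σ_{n=1}^{N} w^{−n} ‖U(n) − U*(n)‖. -/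
/-- Lower-bound half of the norm-equivalence theorem for the proximity
function: the weighted sum of interface jumps is bounded by `(1 + θ)` times the
weighted trajectory error, where `θ = Λ/w` is the stability ratio. -/
theorem proximity_lower_bound
    {E : Type*} [NormedAddCommGroup E] [NormedSpace ℝ E]
    (F : E → E) (Λ : ℝ) (hΛ : 0 ≤ Λ)
    (hF : ∀ x y : E, ‖F x - F y‖ ≤ Λ * ‖x - y‖)
    (w : ℝ) (hw : 0 < w) (θ : ℝ) (hθ : θ = Λ / w)
    (N : ℕ) (hN : 1 ≤ N) (u₀ : E)
    (U : Fin (N + 1) → E) (hU0 : U 0 = u₀) :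
    ∑ n : Fin N, w ^ (-(n.val + 1 : ℤ)) * ‖U n.succ - F (U n.castSucc)‖
      ≤ (1 + θ) * ∑ n : Fin N, w ^ (-(n.val + 1 : ℤ)) * ‖U n.succ - F^[n.val + 1] u₀‖ := by
  have hθ0 : 0 ≤ θ := hθ ▸ div_nonneg hΛ hw.le
  set V : ℕ → E := fun n => if h : n < N + 1 then U ⟨n, h⟩ else 0 with hV
  set e : ℕ → ℝ := fun n => ‖V n - F^[n] u₀‖ with he
  have he0 : e 0 = 0 := by
    simp [he, hV, show (0:ℕ) < N+1 from Nat.succ_pos N]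
    simpa using congrArg (fun x => x - u₀) hU0 ▸ (by simp [hU0] : U ⟨0, Nat.succ_pos N⟩ - u₀ = 0)
  have henn : ∀ n, 0 ≤ e n := fun n => norm_nonneg _
  have hVs : ∀ n : Fin N, V (n.val + 1) = U n.succ := by
    intro n
    simp only [hV, dif_pos (Nat.succ_lt_succ n.isLt)]
    rfl
  have hVc : ∀ n : Fin N, V n.val = U n.castSucc := by
    intro n
    simp only [hV, dif_pos (Nat.lt_succ_of_lt n.isLt)]
    rfl
  -- per-term bound
  have key : ∀ n : Fin N,
      w ^ (-(n.val + 1 : ℤ)) * ‖U n.succ - F (U n.castSucc)‖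
        ≤ w ^ (-(n.val + 1 : ℤ)) * e (n.val + 1) + θ * (w ^ (-(n.val : ℤ)) * e n.val) := by
    intro n
    have hpow : (0:ℝ) < w ^ (-(n.val + 1 : ℤ)) := zpow_pos hw _
    have htri : ‖U n.succ - F (U n.castSucc)‖ ≤ e (n.val + 1) + Λ * e n.val := by
      have h1 : U n.succ - F (U n.castSucc)
          = (V (n.val + 1) - F^[n.val + 1] u₀) + (F (F^[n.val] u₀) - F (V n.val)) := by
        rw [hVs n, hVc n, Function.iterate_succ_apply' F n.val u₀]
        abel
      calc ‖U n.succ - F (U n.castSucc)‖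
          ≤ ‖V (n.val + 1) - F^[n.val + 1] u₀‖ + ‖F (F^[n.val] u₀) - F (V n.val)‖ := by
            rw [h1]; exact norm_add_le _ _
        _ ≤ e (n.val + 1) + Λ * e n.val := by
            refine add_le_add le_rfl ?_
            calc ‖F (F^[n.val] u₀) - F (V n.val)‖ ≤ Λ * ‖F^[n.val] u₀ - V n.val‖ := hF _ _
              _ = Λ * e n.val := by rw [norm_sub_rev]
    have := mul_le_mul_of_nonneg_left htri hpow.le
    refine this.trans_eq ?_
    have hsplit : w ^ (-(n.val + 1 : ℤ)) * Λ = θ * w ^ (-(n.val : ℤ)) := by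
      rw [hθ, show (-(n.val + 1 : ℤ)) = -1 + -(n.val : ℤ) by ring, zpow_add₀ hw.ne',
        zpow_neg_one]
      field_simp
    rw [mul_add]
    congr 1
    rw [← mul_assoc, hsplit]
    ring
  have hsum1 : ∑ n : Fin N, w ^ (-(n.val + 1 : ℤ)) * ‖U n.succ - F (U n.castSucc)‖
      ≤ ∑ n : Fin N, w ^ (-(n.val + 1 : ℤ)) * e (n.val + 1)
        + θ * ∑ n : Fin N, w ^ (-(n.val : ℤ)) * e n.val := by
    rw [Finset.mul_sum, ← Finset.sum_add_distrib]
    exact Finset.sum_le_sum fun n _ => key n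
  -- shift lemma
  have hshift : ∑ n : Fin N, w ^ (-(n.val : ℤ)) * e n.val
      ≤ ∑ n : Fin N, w ^ (-(n.val + 1 : ℤ)) * e (n.val + 1) := by
    rw [Fin.sum_univ_eq_sum_range (fun n => w ^ (-(n : ℤ)) * e n),
        Fin.sum_univ_eq_sum_range (fun n => w ^ (-((n : ℤ) + 1)) * e (n + 1))]
    obtain ⟨M, rfl⟩ : ∃ M, N = M + 1 := ⟨N - 1, by omega⟩
    rw [Finset.sum_range_succ' (fun n => w ^ (-(n : ℤ)) * e n) M]
    simp only [he0, Nat.cast_zero, neg_zero, zpow_zero, mul_zero, add_zero]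
    refine Finset.sum_le_sum_of_subset_of_nonneg (Finset.range_subset_range.2 (Nat.le_succ M)) ?_
    intro i _ _
    positivity
  have hgoal2 : ∑ n : Fin N, w ^ (-(n.val + 1 : ℤ)) * e (n.val + 1)
      = ∑ n : Fin N, w ^ (-(n.val + 1 : ℤ)) * ‖U n.succ - F^[n.val + 1] u₀‖ := by
    refine Finset.sum_congr rfl fun n _ => ?_
    rw [he]
    simp only [hVs n]
  calc ∑ n : Fin N, w ^ (-(n.val + 1 : ℤ)) * ‖U n.succ - F (U n.castSucc)‖
      ≤ ∑ n : Fin N, w ^ (-(n.val + 1 : ℤ)) * e (n.val + 1)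
        + θ * ∑ n : Fin N, w ^ (-(n.val : ℤ)) * e n.val := hsum1
    _ ≤ ∑ n : Fin N, w ^ (-(n.val + 1 : ℤ)) * e (n.val + 1)
        + θ * ∑ n : Fin N, w ^ (-(n.val + 1 : ℤ)) * e (n.val + 1) := by
        exact add_le_add le_rfl (mul_le_mul_of_nonneg_left hshift hθ0)
    _ = (1 + θ) * ∑ n : Fin N, w ^ (-(n.val + 1 : ℤ)) * e (n.val + 1) := by ring
    _ = _ := by rw [hgoal2]
end

section
/- Let E be a real normed vector space, ℱ : E → E Lipschitz with constant Λ ≥ 0, w > 0, θ = Λ/w, N ≥ 1, and u₀ ∈ E. Let U : Fin (N+1) → E be a sequence with U(0) = u₀, let U*(n) = ℱ^[n](u₀), and let d_n = ‖U(n) − ℱ(U(n−1))‖ for 1 ≤ n ≤ N. Then Σ_{n=1}^{N} w^{−n} ‖U(n) − U*(n)‖ ≤ (Σ_{m=0}^{N−1} θ^m) · Σ_{j=1}^{N} w^{−j} d_j, where the geometric factor Σ_{m=0}^{N−1} θ^m equals (θ^N − 1)/(θ − 1) when θ ≠ 1 and equals N when θ = 1. -/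
/-- Upper-bound half of the norm-equivalence theorem for the proximity
function: the weighted trajectory error is bounded by the geometric factor
`Σ_{m=0}^{N-1} θ^m` times the weighted sum of interface jumps, where `θ = Λ/w`. -/
theorem proximity_upper_bound
    {E : Type*} [NormedAddCommGroup E] [NormedSpace ℝ E]
    (F : E → E) (Λ : ℝ) (hΛ : 0 ≤ Λ)
    (hF : ∀ x y : E, ‖F x - F y‖ ≤ Λ * ‖x - y‖)
    (w : ℝ) (hw : 0 < w) (θ : ℝ) (hθ : θ = Λ / w)
    (N : ℕ) (hN : 1 ≤ N) (u₀ : E)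
    (U : Fin (N + 1) → E) (hU0 : U 0 = u₀) :
    ∑ n : Fin N, w ^ (-(n.val + 1 : ℤ)) * ‖U n.succ - F^[n.val + 1] u₀‖
      ≤ (∑ m ∈ Finset.range N, θ ^ m) *
        ∑ n : Fin N, w ^ (-(n.val + 1 : ℤ)) * ‖U n.succ - F (U n.castSucc)‖ := by
  subst hθ
  set V : ℕ → E := fun k => U ⟨min k N, by omega⟩ with hV
  have hVval : ∀ k (hk : k ≤ N), V k = U ⟨k, Nat.lt_succ_of_le hk⟩ := by
    intro k hk
    simp [hV, Nat.min_eq_left hk]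
  have hV0 : V 0 = u₀ := by
    rw [hVval 0 (by omega), ← hU0]; rfl
  have hθ0 : (0:ℝ) ≤ Λ / w := div_nonneg hΛ hw.le
  set D : ℕ → ℝ := fun j => ‖V (j + 1) - F (V j)‖ with hD
  have hD0 : ∀ j, 0 ≤ D j := fun j => norm_nonneg _
  -- key recursion bound
  have key : ∀ k, k + 1 ≤ N → ‖V (k + 1) - F^[k + 1] u₀‖ ≤
      ∑ j ∈ Finset.range (k + 1), Λ ^ (k - j) * D j := by
    intro k
    induction k with
    | zero =>
      intro _
      simp [hD, hV0]
    | succ k ih =>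
      intro hk
      have hik := ih (by omega)
      have tri : ‖V (k + 2) - F^[k + 2] u₀‖ ≤
          D (k + 1) + Λ * ‖V (k + 1) - F^[k + 1] u₀‖ := by
        have : F^[k + 2] u₀ = F (F^[k + 1] u₀) := by
          rw [Function.iterate_succ_apply']
        calc ‖V (k + 2) - F^[k + 2] u₀‖
            ≤ ‖V (k + 2) - F (V (k + 1))‖ + ‖F (V (k + 1)) - F^[k + 2] u₀‖ :=
              norm_sub_le_norm_sub_add_norm_sub _ _ _
          _ ≤ D (k + 1) + Λ * ‖V (k + 1) - F^[k + 1] u₀‖ := by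
              rw [this]; exact add_le_add le_rfl (hF _ _)
      have hsum : ∑ j ∈ Finset.range (k + 2), Λ ^ (k + 1 - j) * D j
          = D (k + 1) + Λ * ∑ j ∈ Finset.range (k + 1), Λ ^ (k - j) * D j := by
        rw [Finset.sum_range_succ, Finset.mul_sum]
        rw [Nat.sub_self, pow_zero, one_mul, add_comm]
        congr 1
        refine Finset.sum_congr rfl fun j hj => ?_
        rw [Finset.mem_range] at hj
        rw [← mul_assoc, ← pow_succ']
        congr 2
        omega
      rw [hsum]
      calc ‖V (k + 1 + 1) - F^[k + 1 + 1] u₀‖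
          ≤ D (k + 1) + Λ * ‖V (k + 1) - F^[k + 1] u₀‖ := tri
        _ ≤ D (k + 1) + Λ * ∑ j ∈ Finset.range (k + 1), Λ ^ (k - j) * D j := by
            exact add_le_add le_rfl (mul_le_mul_of_nonneg_left hik hΛ)
  -- convert Fin sums to range sums
  have hsucc : ∀ n : Fin N, U n.succ = V (n.val + 1) := by
    intro n
    rw [hVval (n.val + 1) n.isLt]
    congr 1
  have hcast : ∀ n : Fin N, U n.castSucc = V n.val := by
    intro n
    rw [hVval n.val (le_of_lt n.isLt)]
    congr 1
  have lhs_eq : ∑ n : Fin N, w ^ (-(n.val + 1 : ℤ)) * ‖U n.succ - F^[n.val + 1] u₀‖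
      = ∑ k ∈ Finset.range N, w ^ (-(k + 1 : ℤ)) * ‖V (k + 1) - F^[k + 1] u₀‖ := by
    rw [← Fin.sum_univ_eq_sum_range (fun k => w ^ (-(k + 1 : ℤ)) * ‖V (k + 1) - F^[k + 1] u₀‖)]
    exact Finset.sum_congr rfl fun n _ => by rw [hsucc n]
  have rhs_eq : ∑ n : Fin N, w ^ (-(n.val + 1 : ℤ)) * ‖U n.succ - F (U n.castSucc)‖
      = ∑ j ∈ Finset.range N, w ^ (-(j + 1 : ℤ)) * D j := by
    rw [← Fin.sum_univ_eq_sum_range (fun j => w ^ (-(j + 1 : ℤ)) * D j)]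
    exact Finset.sum_congr rfl fun n _ => by rw [hsucc n, hcast n]
  rw [lhs_eq, rhs_eq]
  have hwpos : ∀ m : ℤ, (0:ℝ) < w ^ m := fun m => zpow_pos hw m
  -- coefficient identity
  have coeff : ∀ j k : ℕ, j ≤ k →
      w ^ (-(k + 1 : ℤ)) * Λ ^ (k - j) = (Λ / w) ^ (k - j) * (w ^ (-(j + 1 : ℤ))) := by
    intro j k hjk
    have : (-(k + 1 : ℤ)) = (-(j + 1 : ℤ)) + (-(k - j : ℕ) : ℤ) := by
      push_cast [Nat.cast_sub hjk]; ring
    rw [this, zpow_add₀ (ne_of_gt hw), div_pow]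
    rw [zpow_neg w ((k - j : ℕ) : ℤ), zpow_natCast]
    field_simp
  -- main chain
  calc ∑ k ∈ Finset.range N, w ^ (-(k + 1 : ℤ)) * ‖V (k + 1) - F^[k + 1] u₀‖
      ≤ ∑ k ∈ Finset.range N, ∑ j ∈ Finset.range (k + 1),
          (Λ / w) ^ (k - j) * (w ^ (-(j + 1 : ℤ)) * D j) := by
        refine Finset.sum_le_sum fun k hk => ?_
        rw [Finset.mem_range] at hk
        calc w ^ (-(k + 1 : ℤ)) * ‖V (k + 1) - F^[k + 1] u₀‖
            ≤ w ^ (-(k + 1 : ℤ)) * ∑ j ∈ Finset.range (k + 1), Λ ^ (k - j) * D j :=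
              mul_le_mul_of_nonneg_left (key k hk) (hwpos _).le
          _ = ∑ j ∈ Finset.range (k + 1), (Λ / w) ^ (k - j) * (w ^ (-(j + 1 : ℤ)) * D j) := by
              rw [Finset.mul_sum]
              refine Finset.sum_congr rfl fun j hj => ?_
              rw [Finset.mem_range] at hj
              rw [← mul_assoc, ← mul_assoc, coeff j k (by omega)]
    _ = ∑ j ∈ Finset.range N, ∑ k ∈ Finset.Ico j N,
          (Λ / w) ^ (k - j) * (w ^ (-(j + 1 : ℤ)) * D j) := by
        have := Finset.sum_Ico_Ico_comm 0 N
          (fun j k => (Λ / w) ^ (k - j) * (w ^ (-(j + 1 : ℤ)) * D j))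
        simp only [Finset.range_eq_Ico]
        rw [this]
    _ ≤ ∑ j ∈ Finset.range N, (∑ m ∈ Finset.range N, (Λ / w) ^ m) *
          (w ^ (-(j + 1 : ℤ)) * D j) := by
        refine Finset.sum_le_sum fun j hj => ?_
        rw [Finset.mem_range] at hj
        have h1 : ∑ k ∈ Finset.Ico j N, (Λ / w) ^ (k - j) * (w ^ (-(j + 1 : ℤ)) * D j)
            = (∑ m ∈ Finset.range (N - j), (Λ / w) ^ m) * (w ^ (-(j + 1 : ℤ)) * D j) := by
          rw [Finset.sum_mul, Finset.sum_Ico_eq_sum_range]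
          refine Finset.sum_congr rfl fun m _ => by rw [Nat.add_sub_cancel_left]
        rw [h1]
        refine mul_le_mul_of_nonneg_right ?_ (mul_nonneg (hwpos _).le (hD0 j))
        exact Finset.sum_le_sum_of_subset_of_nonneg
          (Finset.range_subset_range.mpr (by omega))
          (fun m _ _ => pow_nonneg hθ0 m)
    _ = (∑ m ∈ Finset.range N, (Λ / w) ^ m) *
          ∑ j ∈ Finset.range N, w ^ (-(j + 1 : ℤ)) * D j := by
        rw [Finset.mul_sum]
end

section
/- Let E be a real normed vector space, ℱ : E → E Lipschitz with constant Λ ≥ 0, w > 0, θ = Λ/w, N ≥ 1, and u₀ ∈ E. Let U : Fin (N+1) → E be a sequence with U(0) = u₀, let U*(n) = ℱ^[n](u₀), define the proximity function ψ(U) = (1/N) Σ_{n=1}^{N} w^{−n} ‖U(n) − ℱ(U(n−1))‖ and the weighted trajectory error ‖U − U*‖_W = Σ_{n=1}^{N} w^{−n} ‖U(n) − U*(n)‖ (the p = 1 weighted norm). Then c · ψ(U) ≤ ‖U − U*‖_W ≤ C_N · ψ(U), where c = 1/(1 + θ) and C_N = N · Σ_{m=0}^{N−1} θ^m (so C_N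 = N(θ^N − 1)/(θ − 1) when θ ≠ 1 and C_N = N² when θ = 1). -/
/-- Equivalence of norms for the proximity function `ψ`: with
`c = 1/(1 + θ)` and `C_N = N · Σ_{m=0}^{N-1} θ^m`, the weighted trajectory error
`‖U - U*‖_W` satisfies `c·ψ(U) ≤ ‖U - U*‖_W ≤ C_N·ψ(U)`, where `θ = Λ/w`. -/
theorem proximity_norm_equivalence
    {E : Type*} [NormedAddCommGroup E] [NormedSpace ℝ E]
    (F : E → E) (Λ : ℝ) (hΛ : 0 ≤ Λ)
    (hF : ∀ x y : E, ‖F x - F y‖ ≤ Λ * ‖x - y‖)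
    (w : ℝ) (hw : 0 < w) (θ : ℝ) (hθ : θ = Λ / w)
    (N : ℕ) (hN : 1 ≤ N) (u₀ : E)
    (U : Fin (N + 1) → E) (hU0 : U 0 = u₀)
    (ψ errW : ℝ)
    (hψ : ψ = (1 / (N : ℝ)) *
      ∑ n : Fin N, w ^ (-(n.val + 1 : ℤ)) * ‖U n.succ - F (U n.castSucc)‖)
    (herrW : errW = ∑ n : Fin N, w ^ (-(n.val + 1 : ℤ)) * ‖U n.succ - F^[n.val + 1] u₀‖) :
    (1 / (1 + θ)) * ψ ≤ errW ∧
      errW ≤ ((N : ℝ) * ∑ m ∈ Finset.range N, θ ^ m) * ψ := by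
  have hθ0 : 0 ≤ θ := by rw [hθ]; positivity
  have h1θ : (0:ℝ) < 1 + θ := by linarith
  have hwne : w ≠ 0 := hw.ne'
  have hzpos : ∀ z : ℤ, 0 < w ^ z := fun z => zpow_pos hw z
  set V : ℕ → E := fun k => if h : k < N + 1 then U ⟨k, h⟩ else 0 with hV
  set d : ℕ → ℝ := fun k => w ^ (-(k + 1 : ℤ)) * ‖V (k+1) - F (V k)‖ with hd
  set e : ℕ → ℝ := fun k => w ^ (-(k + 1 : ℤ)) * ‖V (k+1) - F^[k+1] u₀‖ with he
  have hVU : ∀ (k : ℕ) (h : k < N + 1), V k = U ⟨k, h⟩ := fun k h => dif_pos h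
  have hd0 : ∀ k, 0 ≤ d k := by intro k; simp only [hd]; positivity
  have he0 : ∀ k, 0 ≤ e k := by intro k; simp only [he]; positivity
  have hψ' : ψ = (1 / (N:ℝ)) * ∑ k ∈ Finset.range N, d k := by
    rw [hψ, ← Fin.sum_univ_eq_sum_range (fun k => d k)]
    congr 1
    apply Finset.sum_congr rfl
    intro n _
    simp only [hd]
    rw [hVU (n.val+1) (by omega), hVU n.val (by omega)]
    rfl
  have herrW' : errW = ∑ k ∈ Finset.range N, e k := by
    rw [herrW, ← Fin.sum_univ_eq_sum_range (fun k => e k)]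
    apply Finset.sum_congr rfl
    intro n _
    simp only [he]
    rw [hVU (n.val+1) (by omega)]
    rfl
  have hcoef : ∀ k : ℕ, θ * w ^ (-(k + 1 : ℤ)) = Λ * w ^ (-(k + 1 : ℤ) + (-1)) := by
    intro k
    rw [hθ, zpow_add₀ hwne, zpow_neg_one]
    field_simp
  have hbase : e 0 = d 0 := by
    simp only [he, hd]
    rw [Function.iterate_one, hVU 0 (by omega), show (⟨0, by omega⟩ : Fin (N+1)) = 0 from rfl, hU0]
  have key : ∀ m : ℕ, m + 2 < N + 1 + 1 →
      e (m+1) ≤ d (m+1) + θ * e m ∧ d (m+1) ≤ e (m+1) + θ * e m := by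
    intro m hk
    have hiter : F^[m+1+1] u₀ = F (F^[m+1] u₀) := Function.iterate_succ_apply' F (m+1) u₀
    have hfb : ‖F (V (m+1)) - F^[m+1+1] u₀‖ ≤ Λ * ‖V (m+1) - F^[m+1] u₀‖ := by
      rw [hiter]; exact hF _ _
    have htri1 : ‖V (m+1+1) - F^[m+1+1] u₀‖
        ≤ ‖V (m+1+1) - F (V (m+1))‖ + Λ * ‖V (m+1) - F^[m+1] u₀‖ := by
      have h1 := norm_sub_le_norm_sub_add_norm_sub (V (m+1+1)) (F (V (m+1))) (F^[m+1+1] u₀)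
      linarith
    have htri2 : ‖V (m+1+1) - F (V (m+1))‖
        ≤ ‖V (m+1+1) - F^[m+1+1] u₀‖ + Λ * ‖V (m+1) - F^[m+1] u₀‖ := by
      have h1 := norm_sub_le_norm_sub_add_norm_sub (V (m+1+1)) (F^[m+1+1] u₀) (F (V (m+1)))
      have h2 : ‖F^[m+1+1] u₀ - F (V (m+1))‖ = ‖F (V (m+1)) - F^[m+1+1] u₀‖ := norm_sub_rev _ _
      rw [h2] at h1
      linarith
    have hexp : (-((m:ℤ)+1+1 : ℤ)) = (-((m:ℤ)+1)) + (-1) := by ring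
    have hde : d (m+1) = w ^ ((-((m:ℤ)+1)) + (-1)) * ‖V (m+1+1) - F (V (m+1))‖ := by
      simp only [hd]
      norm_cast
    have hee : e (m+1) = w ^ ((-((m:ℤ)+1)) + (-1)) * ‖V (m+1+1) - F^[m+1+1] u₀‖ := by
      simp only [he]
      norm_cast
    have heem : θ * e m = Λ * (w ^ ((-((m:ℤ)+1)) + (-1)) * ‖V (m+1) - F^[m+1] u₀‖) := by
      simp only [he]
      rw [← mul_assoc, hcoef m, mul_assoc]
    have hp : (0:ℝ) < w ^ ((-((m:ℤ)+1)) + (-1)) := hzpos _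
    constructor
    · rw [hee, hde, heem]
      nlinarith [mul_le_mul_of_nonneg_left htri1 hp.le]
    · rw [hee, hde, heem]
      nlinarith [mul_le_mul_of_nonneg_left htri2 hp.le]
  -- cumulative bound
  have cum : ∀ k : ℕ, k < N → e k ≤ ∑ j ∈ Finset.range (k+1), θ ^ (k - j) * d j := by
    intro k
    induction k with
    | zero => intro _; simp [hbase]
    | succ m ih =>
        intro h
        have h1 := (key m (by omega)).1
        have h2 := ih (by omega)
        calc e (m+1) ≤ d (m+1) + θ * e m := h1
          _ ≤ d (m+1) + θ * ∑ j ∈ Finset.range (m+1), θ ^ (m - j) * d j := by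
              have := mul_le_mul_of_nonneg_left h2 hθ0
              linarith
          _ = ∑ j ∈ Finset.range (m+1+1), θ ^ (m+1 - j) * d j := by
              have expand : ∑ j ∈ Finset.range (m+1+1), θ ^ (m+1 - j) * d j
                  = (∑ j ∈ Finset.range (m+1), θ ^ (m+1 - j) * d j)
                      + θ ^ (m+1 - (m+1)) * d (m+1) := Finset.sum_range_succ _ _
              rw [expand, show m + 1 - (m+1) = 0 from by omega, pow_zero, one_mul,
                Finset.mul_sum, add_comm]
              congr 1
              apply Finset.sum_congr rfl
              intro j hj
              rw [Finset.mem_range] at hj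
              rw [show m + 1 - j = (m - j) + 1 from by omega, pow_succ', mul_assoc]
  have hDψ : (N:ℝ) * ψ = ∑ k ∈ Finset.range N, d k := by
    rw [hψ', ← mul_assoc, mul_one_div, div_self (by positivity : (N:ℝ) ≠ 0), one_mul]
  -- lower bound
  have hprev : ∑ k ∈ Finset.range N, (if k = 0 then 0 else e (k-1)) ≤ ∑ k ∈ Finset.range N, e k := by
    obtain ⟨M, rfl⟩ : ∃ M, N = M + 1 := ⟨N - 1, by omega⟩
    rw [Finset.sum_range_succ' (fun k => if k = 0 then 0 else e (k-1)) M]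
    have hcg : ∀ i ∈ Finset.range M, (if i + 1 = 0 then (0:ℝ) else e (i+1-1)) = e i := by
      intro i _
      rw [if_neg (Nat.succ_ne_zero i), Nat.add_sub_cancel]
    rw [Finset.sum_congr rfl hcg, if_pos rfl, add_zero, Finset.sum_range_succ]
    have := he0 M
    linarith
  have hlow : ∑ k ∈ Finset.range N, d k ≤ (1 + θ) * ∑ k ∈ Finset.range N, e k := by
    have step : ∀ k ∈ Finset.range N, d k ≤ e k + θ * (if k = 0 then 0 else e (k-1)) := by
      intro k hk
      rw [Finset.mem_range] at hk
      match k with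
      | 0 => simp [hbase]
      | (m+1) =>
          simp only [if_neg (Nat.succ_ne_zero m), Nat.add_sub_cancel]
          exact (key m (by omega)).2
    calc ∑ k ∈ Finset.range N, d k
        ≤ ∑ k ∈ Finset.range N, (e k + θ * (if k = 0 then 0 else e (k-1))) :=
          Finset.sum_le_sum step
      _ = ∑ k ∈ Finset.range N, e k + θ * ∑ k ∈ Finset.range N, (if k = 0 then 0 else e (k-1)) := by
          rw [Finset.sum_add_distrib, Finset.mul_sum]
      _ ≤ (1 + θ) * ∑ k ∈ Finset.range N, e k := by
          have := mul_le_mul_of_nonneg_left hprev hθ0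
          linarith
  -- upper bound chain
  have hup : ∑ k ∈ Finset.range N, e k
      ≤ (∑ m ∈ Finset.range N, θ ^ m) * ∑ k ∈ Finset.range N, d k := by
    have step1 : ∑ k ∈ Finset.range N, e k
        ≤ ∑ k ∈ Finset.range N, ∑ j ∈ Finset.range N,
            (if j < k + 1 then θ ^ (k - j) * d j else 0) := by
      apply Finset.sum_le_sum
      intro k hk
      rw [Finset.mem_range] at hk
      refine (cum k hk).trans (le_of_eq ?_)
      rw [← Finset.sum_subset (Finset.range_subset_range.2 (by omega : k + 1 ≤ N))
        (fun x _ hx => by rw [if_neg (by simpa using hx)])]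
      apply Finset.sum_congr rfl
      intro j hj
      rw [Finset.mem_range] at hj
      rw [if_pos hj]
    rw [Finset.sum_comm] at step1
    refine step1.trans ?_
    have hinner : ∀ j ∈ Finset.range N,
        (∑ k ∈ Finset.range N, if j < k + 1 then θ ^ (k - j) * d j else 0)
          ≤ (∑ m ∈ Finset.range N, θ ^ m) * d j := by
      intro j hj
      rw [Finset.mem_range] at hj
      have hfil : (∑ k ∈ Finset.range N, (if j < k + 1 then θ ^ (k - j) * d j else 0))
          = ∑ k ∈ Finset.Ico j N, θ ^ (k - j) * d j := by
        rw [← Finset.sum_filter]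
        congr 1
        ext k
        simp only [Finset.mem_filter, Finset.mem_range, Finset.mem_Ico]
        omega
      rw [hfil, Finset.sum_Ico_eq_sum_range]
      have : ∑ i ∈ Finset.range (N - j), θ ^ (j + i - j) * d j
          = (∑ i ∈ Finset.range (N - j), θ ^ i) * d j := by
        rw [Finset.sum_mul]
        apply Finset.sum_congr rfl
        intro i _
        rw [show j + i - j = i from by omega]
      rw [this]
      refine mul_le_mul_of_nonneg_right ?_ (hd0 j)
      refine Finset.sum_le_sum_of_subset_of_nonneg (Finset.range_subset_range.2 (by omega)) ?_
      intro i _ _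
      positivity
    calc ∑ j ∈ Finset.range N, ∑ k ∈ Finset.range N, (if j < k + 1 then θ ^ (k - j) * d j else 0)
        ≤ ∑ j ∈ Finset.range N, (∑ m ∈ Finset.range N, θ ^ m) * d j := Finset.sum_le_sum hinner
      _ = (∑ m ∈ Finset.range N, θ ^ m) * ∑ k ∈ Finset.range N, d k := by rw [Finset.mul_sum]
  set Sd := ∑ k ∈ Finset.range N, d k with hSd
  set Se := ∑ k ∈ Finset.range N, e k with hSe
  have hSd0 : 0 ≤ Sd := Finset.sum_nonneg fun k _ => hd0 k
  have hSe0 : 0 ≤ Se := Finset.sum_nonneg fun k _ => he0 k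
  have hN1 : (1:ℝ) ≤ (N:ℝ) := by exact_mod_cast hN
  constructor
  · have hψle : ψ ≤ (1 + θ) * Se := by
      rw [hψ']
      have h1N : 1 / (N:ℝ) ≤ 1 := by
        rw [div_le_one (by positivity)]; exact hN1
      nlinarith
    rw [herrW', div_mul_eq_mul_div, div_le_iff₀ h1θ, one_mul]
    linarith
  · rw [herrW']
    calc Se ≤ (∑ m ∈ Finset.range N, θ ^ m) * Sd := hup
      _ = ((N:ℝ) * ∑ m ∈ Finset.range N, θ ^ m) * ψ := by rw [← hDψ]; ring
end
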